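/- Inversion lemma: assume k ≠ 0 and let q ∈ ℝ with q ∉ {q₋, q₊}. Define X := sgn((q − q₊)/(q − q₋)) · |(q − q₊)/(q − q₋)|^{1/ζ}, so that sgn(X)|X|^ζ = (q − q₊)/(q − q₋). Then r(q) = ζ r_s · |X|^{(ζ−1)/2} / |1 − sgn(X)·|X|^{ζ}|. -/

import Mathlib

open Real

/-- Inversion lemma: for `k ≠ 0` and `q ∉ {q₋, q₊}`, with
`X := sgn((q−q₊)/(q−q₋))·|(q−q₊)/(q−q₋)|^{1/ζ}`, one has
`sgn(X)|X|^ζ = (q−q₊)/(q−q₋)` and `r(q) = ζ r_s |X|^{(ζ−1)/2} / |1 − sgn(X)|X|^ζ|`. -/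
theorem special_buchdahl_inversion
    (rs k : ℝ) (hrs : 0 < rs) (hk : k ≠ 0)
    (qp qm ζ : ℝ)
    (hqp : qp = (-rs + Real.sqrt (rs ^ 2 + 3 * k ^ 2)) / 2)
    (hqm : qm = (-rs - Real.sqrt (rs ^ 2 + 3 * k ^ 2)) / 2)
    (hζ : ζ = Real.sqrt (1 + 3 * k ^ 2 / rs ^ 2))
    (r : ℝ → ℝ)
    (hr : ∀ q : ℝ, r q = |q - qp| ^ (qp / (qp - qm)) * |q - qm| ^ (-(qm / (qp - qm))))
    (q : ℝ) (h1 : q ≠ qm) (h2 : q ≠ qp)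
    (X : ℝ)
    (hX : X = Real.sign ((q - qp) / (q - qm)) * |(q - qp) / (q - qm)| ^ (1 / ζ)) :
    Real.sign X * |X| ^ ζ = (q - qp) / (q - qm) ∧
      r q = ζ * rs * |X| ^ ((ζ - 1) / 2) / |1 - Real.sign X * |X| ^ ζ| := by
  have hS0 : (0:ℝ) < rs ^ 2 + 3 * k ^ 2 := by positivity
  set S := Real.sqrt (rs ^ 2 + 3 * k ^ 2) with hS
  have hSpos : 0 < S := Real.sqrt_pos.mpr hS0
  have hζS : ζ * rs = S := by
    rw [hζ, hS]
    nth_rewrite 2 [← Real.sqrt_sq hrs.le]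
    rw [← Real.sqrt_mul (by positivity)]
    congr 1
    field_simp
  have hζ1 : 1 < ζ := by
    rw [hζ]
    have hk2 : 0 < 3 * k ^ 2 / rs ^ 2 := by positivity
    nlinarith [Real.sq_sqrt (show (0:ℝ) ≤ 1 + 3 * k ^ 2 / rs ^ 2 by positivity),
      Real.sqrt_nonneg (1 + 3 * k ^ 2 / rs ^ 2)]
  have hζpos : 0 < ζ := by linarith
  have hζne : ζ ≠ 0 := ne_of_gt hζpos
  have hqpm : qp - qm = S := by rw [hqp, hqm]; ring
  have hqm0 : q - qm ≠ 0 := sub_ne_zero.mpr h1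
  have hqp0 : q - qp ≠ 0 := sub_ne_zero.mpr h2
  set u := (q - qp) / (q - qm) with hu
  have hu0 : u ≠ 0 := div_ne_zero hqp0 hqm0
  have hup : 0 < |u| := abs_pos.mpr hu0
  have hXp : 0 < |u| ^ (1 / ζ) := Real.rpow_pos_of_pos hup _
  have hsgnX : Real.sign X = Real.sign u := by
    rcases hu0.lt_or_gt with h | h
    · rw [hX, Real.sign_of_neg h]
      rw [Real.sign_of_neg (by nlinarith)]
    · rw [hX, Real.sign_of_pos h]
      rw [Real.sign_of_pos (by nlinarith)]
  have habsX : |X| = |u| ^ (1 / ζ) := by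
    rw [hX, abs_mul, abs_of_pos hXp]
    rcases hu0.lt_or_gt with h | h
    · rw [Real.sign_of_neg h]; simp
    · rw [Real.sign_of_pos h]; simp
  have hXζ : |X| ^ ζ = |u| := by
    rw [habsX, ← Real.rpow_mul (abs_nonneg u)]
    rw [one_div, inv_mul_cancel₀ hζne, Real.rpow_one]
  have hfirst : Real.sign X * |X| ^ ζ = u := by
    rw [hsgnX, hXζ]
    rcases hu0.lt_or_gt with h | h
    · rw [Real.sign_of_neg h, abs_of_neg h]; ring
    · rw [Real.sign_of_pos h, abs_of_pos h]; ring
  refine ⟨hfirst, ?_⟩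
  rw [hfirst]
  -- exponents
  have hqpv : qp = rs * (ζ - 1) / 2 := by
    rw [hqp, ← hζS]; ring
  have hqmv : qm = -(rs * (ζ + 1)) / 2 := by
    rw [hqm, ← hζS]; ring
  have ha : qp / (qp - qm) = (ζ - 1) / (2 * ζ) := by
    rw [hqpm, hqpv, ← hζS]
    field_simp
  have hb : -(qm / (qp - qm)) = (ζ + 1) / (2 * ζ) := by
    rw [hqpm, hqmv, ← hζS]
    field_simp
  have h1u : 1 - u = (ζ * rs) / (q - qm) := by
    rw [hu, hζS, ← hqpm]
    field_simp
    ring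
  have hXe : |X| ^ ((ζ - 1) / 2) = |u| ^ ((ζ - 1) / (2 * ζ)) := by
    rw [habsX, ← Real.rpow_mul (abs_nonneg u),
      show 1 / ζ * ((ζ - 1) / 2) = (ζ - 1) / (2 * ζ) by rw [one_div, inv_mul_eq_div, div_div, mul_comm]]
  have hden : |1 - u| = ζ * rs / |q - qm| := by
    rw [h1u, abs_div, abs_of_pos (by positivity : (0:ℝ) < ζ * rs)]
  rw [hr, ha, hb, hXe, hden]
  have habsu : |u| = |q - qp| / |q - qm| := by rw [hu, abs_div]
  rw [habsu, Real.div_rpow (abs_nonneg _) (abs_nonneg _)]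
  have hqmp : 0 < |q - qm| := abs_pos.mpr hqm0
  have hqpp : 0 < |q - qp| := abs_pos.mpr hqp0
  have hsum : |q - qm| ^ ((ζ - 1) / (2 * ζ)) * |q - qm| ^ ((ζ + 1) / (2 * ζ)) = |q - qm| := by
    rw [← Real.rpow_add hqmp]
    rw [show (ζ - 1) / (2 * ζ) + (ζ + 1) / (2 * ζ) = 1 by field_simp; ring, Real.rpow_one]
  have hne1 : |q - qm| ^ ((ζ - 1) / (2 * ζ)) ≠ 0 := ne_of_gt (Real.rpow_pos_of_pos hqmp _)
  have hbval : |q - qm| ^ ((ζ + 1) / (2 * ζ)) = |q - qm| / |q - qm| ^ ((ζ - 1) / (2 * ζ)) := by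
    rw [eq_div_iff hne1, mul_comm]
    exact hsum
  rw [hbval]
  have hζrs : ζ * rs ≠ 0 := by positivity
  field_simp
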